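/- For every integer s ≥ 2, the special linear group SL(2, q) over the finite field with q = 2^s elements has no 3-fold factorization of the form (2, 2^{s-2}(2^{2s} − 1), 2). -/

import Mathlib

open Pointwise

/-- A finite group `G` has a `k`-fold factorization of the form `(a 0, …, a (k-1))`:
there are subsets `A 0, …, A (k-1)` of `G` with `|A i| = a i`, `|G| = a 0 ⋯ a (k-1)`,
and the setwise product `A 0 ⋯ A (k-1)` equals `G`. -/
def HasFactorization (G : Type*) [Group G] {k : ℕ} (a : Fin k → ℕ) : Prop :=
  ∃ A : Fin k → Set G,
    (∀ i, Nat.card (A i) = a i) ∧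
    Nat.card G = ∏ i, a i ∧
    (List.ofFn A).prod = (Set.univ : Set G)

section MatrixLemmas

variable {R : Type*} [CommRing R]

lemma SL2fact.keyA (h2 : (2:R) = 0) (p q r μ : R) (hkey : p*p + q*r = 1) :
    !![p,q;r,p] * !![μ*q, 0; μ*(p+1), μ] = !![μ*q, 0; μ*(p+1), μ] * !![1,1;0,1] := by
  rw [Matrix.mul_fin_two, Matrix.mul_fin_two]
  ext i j
  fin_cases i <;> fin_cases j <;> simp
  · linear_combination (μ*p*q) * h2
  · ring
  · linear_combination μ * hkey
  · linear_combination -μ * h2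

lemma SL2fact.keyB (r μ : R) :
    !![1,(0:R);r,1] * !![0, μ; μ*r, 0] = !![0, μ; μ*r, 0] * !![1,1;0,1] := by
  rw [Matrix.mul_fin_two, Matrix.mul_fin_two]
  ext i j
  fin_cases i <;> fin_cases j <;> simp
  ring

end MatrixLemmas

section SL2sec

variable {F : Type*} [Field F]

local notation "SL2" => Matrix.SpecialLinearGroup (Fin 2) F

def SL2fact.uMat (F : Type*) [Field F] : Matrix (Fin 2) (Fin 2) F := !![1, 1; 0, 1]

lemma SL2fact.det_uMat : (SL2fact.uMat F).det = 1 := by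
  simp [SL2fact.uMat, Matrix.det_fin_two_of]

def SL2fact.uSL (F : Type*) [Field F] : Matrix.SpecialLinearGroup (Fin 2) F :=
  ⟨SL2fact.uMat F, SL2fact.det_uMat⟩

/-- In `SL(2, F)` with `char F = 2`, any element commuting with an involution
squares to the identity. -/
lemma SL2fact.sq_one_of_commute (h2 : (2 : F) = 0) (x y : SL2)
    (hy2 : y * y = 1) (hy1 : y ≠ 1) (hc : x * y = y * x) : x * x = 1 := by
  have hY : ((y : Matrix (Fin 2) (Fin 2) F) * y) = 1 := by
    have := congrArg (fun w : SL2 => (w : Matrix (Fin 2) (Fin 2) F)) hy2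
    simpa using this
  set Y : Matrix (Fin 2) (Fin 2) F := (y : Matrix (Fin 2) (Fin 2) F) with hYdef
  set X : Matrix (Fin 2) (Fin 2) F := (x : Matrix (Fin 2) (Fin 2) F) with hXdef
  have hdetY : Y 0 0 * Y 1 1 - Y 0 1 * Y 1 0 = 1 := by
    rw [← Matrix.det_fin_two]; exact y.prop
  have hdetX : X 0 0 * X 1 1 - X 0 1 * X 1 0 = 1 := by
    rw [← Matrix.det_fin_two]; exact x.prop
  have e00 : Y 0 0 * Y 0 0 + Y 0 1 * Y 1 0 = 1 := by
    have := congrFun (congrFun hY 0) 0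
    simpa [Matrix.mul_apply, Fin.sum_univ_two, Matrix.one_apply] using this
  have e11 : Y 1 0 * Y 0 1 + Y 1 1 * Y 1 1 = 1 := by
    have := congrFun (congrFun hY 1) 1
    simpa [Matrix.mul_apply, Fin.sum_univ_two, Matrix.one_apply] using this
  have hpt : Y 0 0 = Y 1 1 := by
    have hsq : (Y 0 0 - Y 1 1) ^ 2 = 0 := by
      linear_combination e00 + e11 - 2*hdetY - (2*(Y 0 1 * Y 1 0))*h2
    exact sub_eq_zero.mp (pow_eq_zero_iff (n := 2) (by norm_num) |>.mp hsq)
  have hqr : Y 0 1 ≠ 0 ∨ Y 1 0 ≠ 0 := by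
    by_contra h
    push_neg at h
    obtain ⟨hq, hr⟩ := h
    have hp1 : (Y 0 0 - 1) ^ 2 = 0 := by
      linear_combination e00 - Y 0 1 * hr - (Y 0 0 - 1) * h2
    have hp : Y 0 0 = 1 := sub_eq_zero.mp (pow_eq_zero_iff (n := 2) (by norm_num) |>.mp hp1)
    have h11 : Y 1 1 = 1 := by rw [← hpt]; exact hp
    have hY1 : Y = 1 := by
      ext i j
      fin_cases i <;> fin_cases j <;> simp [Matrix.one_apply]
      · exact hp
      · exact hq
      · exact hr
      · exact h11
    apply hy1
    apply Subtype.ext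
    simpa using hY1
  have hXY : (X * Y) = Y * X := by
    have := congrArg (fun w : SL2 => (w : Matrix (Fin 2) (Fin 2) F)) hc
    simpa using this
  have c01 : X 0 0 * Y 0 1 + X 0 1 * Y 1 1 = Y 0 0 * X 0 1 + Y 0 1 * X 1 1 := by
    have := congrFun (congrFun hXY 0) 1
    simpa [Matrix.mul_apply, Fin.sum_univ_two] using this
  have c10 : X 1 0 * Y 0 0 + X 1 1 * Y 1 0 = Y 1 0 * X 0 0 + Y 1 1 * X 1 0 := by
    have := congrFun (congrFun hXY 1) 0
    simpa [Matrix.mul_apply, Fin.sum_univ_two] using this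
  have had : X 0 0 = X 1 1 := by
    rcases hqr with hq | hr
    · have : Y 0 1 * (X 0 0 - X 1 1) = 0 := by linear_combination c01 + X 0 1 * hpt
      rcases mul_eq_zero.mp this with h | h
      · exact absurd h hq
      · exact sub_eq_zero.mp h
    · have : Y 1 0 * (X 1 1 - X 0 0) = 0 := by linear_combination c10 - X 1 0 * hpt
      rcases mul_eq_zero.mp this with h | h
      · exact absurd h hr
      · exact (sub_eq_zero.mp h).symm
  apply Subtype.ext
  have : ((x * x : SL2) : Matrix (Fin 2) (Fin 2) F) = X * X := by simp [hXdef]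
  rw [this]
  ext i j
  fin_cases i <;> fin_cases j <;>
    simp only [Matrix.mul_apply, Fin.sum_univ_two, Matrix.SpecialLinearGroup.coe_one,
      Matrix.one_apply, if_true, if_false, Fin.zero_eta, Fin.mk_one, ne_eq, zero_ne_one,
      one_ne_zero, reduceIte]
  · linear_combination hdetX + X 0 1 * X 1 0 * h2 + X 0 0 * had
  · linear_combination X 0 1 * had + X 0 1 * X 1 1 * h2
  · linear_combination X 1 0 * had.symm + X 1 0 * X 0 0 * h2
  · linear_combination hdetX + X 0 1 * X 1 0 * h2 + X 1 1 * had.symm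

/-- Every involution in `SL(2, F)`, with `F` of characteristic two in which every
element is a square, is conjugate to the standard unipotent involution. -/
lemma SL2fact.conj_u (h2 : (2 : F) = 0) (hsq : ∀ α : F, IsSquare α) (x : SL2)
    (hx2 : x * x = 1) (hx1 : x ≠ 1) : ∃ g : SL2, x * g = g * SL2fact.uSL F := by
  have hX : ((x : Matrix (Fin 2) (Fin 2) F) * x) = 1 := by
    have := congrArg (fun w : SL2 => (w : Matrix (Fin 2) (Fin 2) F)) hx2
    simpa using this
  set X : Matrix (Fin 2) (Fin 2) F := (x : Matrix (Fin 2) (Fin 2) F) with hXdef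
  have hdetX : X 0 0 * X 1 1 - X 0 1 * X 1 0 = 1 := by
    rw [← Matrix.det_fin_two]; exact x.prop
  have e00 : X 0 0 * X 0 0 + X 0 1 * X 1 0 = 1 := by
    have := congrFun (congrFun hX 0) 0
    simpa [Matrix.mul_apply, Fin.sum_univ_two, Matrix.one_apply] using this
  have e11 : X 1 0 * X 0 1 + X 1 1 * X 1 1 = 1 := by
    have := congrFun (congrFun hX 1) 1
    simpa [Matrix.mul_apply, Fin.sum_univ_two, Matrix.one_apply] using this
  have hpt : X 0 0 = X 1 1 := by
    have hsq' : (X 0 0 - X 1 1) ^ 2 = 0 := by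
      linear_combination e00 + e11 - 2*hdetX - (2*(X 0 1 * X 1 0))*h2
    exact sub_eq_zero.mp (pow_eq_zero_iff (n := 2) (by norm_num) |>.mp hsq')
  by_cases hq0 : X 0 1 = 0
  · have hp1 : X 0 0 = 1 := by
      have h' : (X 0 0 - 1) ^ 2 = 0 := by
        linear_combination e00 - X 1 0 * hq0 - (X 0 0 - 1) * h2
      exact sub_eq_zero.mp (pow_eq_zero_iff (n := 2) (by norm_num) |>.mp h')
    have h11 : X 1 1 = 1 := by rw [← hpt]; exact hp1
    have hXlit : X = !![1, 0; X 1 0, 1] := by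
      ext i j
      fin_cases i <;> fin_cases j <;> simp
      · exact hp1
      · exact hq0
      · exact h11
    have hr0 : X 1 0 ≠ 0 := by
      intro hr0
      apply hx1
      apply Subtype.ext
      show X = _
      rw [hXlit, hr0]
      ext i j
      fin_cases i <;> fin_cases j <;> simp [Matrix.one_apply]
    obtain ⟨μ, hμ⟩ := hsq ((X 1 0)⁻¹)
    have hμr : μ * μ * X 1 0 = 1 := by
      rw [← hμ]; exact inv_mul_cancel₀ hr0
    refine ⟨⟨!![0, μ; μ * X 1 0, 0], ?_⟩, ?_⟩
    · rw [Matrix.det_fin_two_of]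
      linear_combination -hμr - h2
    · have key := SL2fact.keyB (X 1 0) μ
      rw [← hXlit] at key
      apply Subtype.ext
      show X * _ = _ * SL2fact.uMat F
      exact key
  · have hXlit : X = !![X 0 0, X 0 1; X 1 0, X 0 0] := by
      ext i j
      fin_cases i <;> fin_cases j <;> simp
      exact hpt.symm
    obtain ⟨μ, hμ⟩ := hsq ((X 0 1)⁻¹)
    have hμq : μ * μ * X 0 1 = 1 := by
      rw [← hμ]; exact inv_mul_cancel₀ hq0
    refine ⟨⟨!![μ * X 0 1, 0; μ * (X 0 0 + 1), μ], ?_⟩, ?_⟩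
    · rw [Matrix.det_fin_two_of]
      linear_combination hμq
    · have key := SL2fact.keyA h2 (X 0 0) (X 0 1) (X 1 0) μ e00
      rw [← hXlit] at key
      apply Subtype.ext
      show X * _ = _ * SL2fact.uMat F
      exact key

end SL2sec

section Helpers

lemma SL2fact.parity_flip {α : Type*} (f : α → α) (S : Set α)
    (h1 : ∀ g ∈ S, f g ∉ S) (h2 : ∀ g, g ∉ S → f g ∈ S) :
    ∀ (k : ℕ) (g), g ∈ S → (f^[k] g ∈ S ↔ Even k) := by
  intro k
  induction k with
  | zero => intro g hg; simpa using hg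
  | succ n ih =>
    intro g hg
    rw [Function.iterate_succ_apply']
    by_cases h : Even n
    · have hin : f^[n] g ∈ S := (ih g hg).2 h
      have := h1 _ hin
      simp [Nat.even_add_one, h, this]
    · have hn : f^[n] g ∉ S := fun hh => h ((ih g hg).1 hh)
      have := h2 _ hn
      simp [Nat.even_add_one, h, this]

lemma SL2fact.four_disjoint {α : Type*} [Finite α] {M : ℕ}
    (S T U V : Set α)
    (hcov : ∀ g : α, g ∈ S ∨ g ∈ T ∨ g ∈ U ∨ g ∈ V)
    (hS : S.ncard = M) (hT : T.ncard = M) (hU : U.ncard = M) (hV : V.ncard = M)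
    (htot : Nat.card α = 4 * M) : S ∩ T = ∅ := by
  have hu : S ∪ T ∪ U ∪ V = Set.univ := by
    ext g
    simp only [Set.mem_union, Set.mem_univ, iff_true]
    have := hcov g
    tauto
  have h1 : (S ∪ T ∪ U ∪ V).ncard = 4 * M := by rw [hu, Set.ncard_univ, htot]
  have h2 : (S ∪ T ∪ U ∪ V).ncard ≤ (S ∪ T).ncard + U.ncard + V.ncard := by
    calc (S ∪ T ∪ U ∪ V).ncard ≤ (S ∪ T ∪ U).ncard + V.ncard := Set.ncard_union_le _ _
    _ ≤ (S ∪ T).ncard + U.ncard + V.ncard := by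
        have := Set.ncard_union_le (S ∪ T) U
        omega
  have h3 : (S ∪ T).ncard + (S ∩ T).ncard = S.ncard + T.ncard :=
    Set.ncard_union_add_ncard_inter S T
  have h4 : (S ∩ T).ncard = 0 := by omega
  exact (Set.ncard_eq_zero (Set.toFinite _)).mp h4

lemma SL2fact.mulLeft_iterate_eq {G : Type*} [Group G] (a : G) (n : ℕ) (g : G) :
    (fun x => a * x)^[n] g = a ^ n * g := by
  induction n with
  | zero => simp
  | succ n ih => rw [Function.iterate_succ_apply', ih, ← mul_assoc, ← pow_succ']

lemma SL2fact.mulRight_iterate_eq {G : Type*} [Group G] (c : G) (n : ℕ) (g : G) :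
    (fun x => x * c)^[n] g = g * c ^ n := by
  induction n with
  | zero => simp
  | succ n ih => rw [Function.iterate_succ_apply', ih, mul_assoc, ← pow_succ]

/-- An element admitting a "flipping set" for left multiplication has even order. -/
lemma SL2fact.even_orderOf_of_flip {G : Type*} [Group G] [Finite G] (a : G) (E : Set G)
    (hne : E.Nonempty) (himg : (fun g => a * g) '' E = Eᶜ) : Even (orderOf a) := by
  have hbij : Function.Bijective (fun g : G => a * g) := Group.mulLeft_bijective a
  have h1 : ∀ g ∈ E, a * g ∉ E := by
    intro g hg
    have : a * g ∈ Eᶜ := himg ▸ Set.mem_image_of_mem _ hg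
    exact this
  have h2 : ∀ g, g ∉ E → a * g ∈ E := by
    intro g hg
    have : a * g ∈ (fun g => a * g) '' Eᶜ := Set.mem_image_of_mem _ hg
    rwa [Set.image_compl_eq hbij, himg, compl_compl] at this
  obtain ⟨g₀, hg₀⟩ := hne
  have := SL2fact.parity_flip _ E h1 h2 (orderOf a) g₀ hg₀
  rw [SL2fact.mulLeft_iterate_eq, pow_orderOf_eq_one, one_mul] at this
  exact this.mp hg₀

lemma SL2fact.even_orderOf_of_flip_right {G : Type*} [Group G] [Finite G] (c : G) (E : Set G)
    (hne : E.Nonempty) (himg : (fun g => g * c) '' E = Eᶜ) : Even (orderOf c) := by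
  have hbij : Function.Bijective (fun g : G => g * c) := Group.mulRight_bijective c
  have h1 : ∀ g ∈ E, g * c ∉ E := by
    intro g hg
    have : g * c ∈ Eᶜ := himg ▸ Set.mem_image_of_mem _ hg
    exact this
  have h2 : ∀ g, g ∉ E → g * c ∈ E := by
    intro g hg
    have : g * c ∈ (fun g => g * c) '' Eᶜ := Set.mem_image_of_mem _ hg
    rwa [Set.image_compl_eq hbij, himg, compl_compl] at this
  obtain ⟨g₀, hg₀⟩ := hne
  have := SL2fact.parity_flip _ E h1 h2 (orderOf c) g₀ hg₀
  rw [SL2fact.mulRight_iterate_eq, pow_orderOf_eq_one, mul_one] at this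
  exact this.mp hg₀

lemma SL2fact.sq_eq_one_of_even_orderOf {G : Type*} [Group G] [Finite G] (a : G)
    (hev : Even (orderOf a))
    (key : ∀ y : G, y * y = 1 → y ≠ 1 → a * y = y * a → a * a = 1) :
    a * a = 1 := by
  obtain ⟨m, hm⟩ := hev
  have hn0 : 0 < orderOf a := orderOf_pos a
  have hm0 : 0 < m := by omega
  set y := a ^ m with hy
  have hy2 : y * y = 1 := by
    rw [hy, ← pow_add, ← hm, pow_orderOf_eq_one]
  have hy1 : y ≠ 1 := by
    intro h
    have hd := orderOf_dvd_of_pow_eq_one h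
    have := Nat.le_of_dvd hm0 hd
    omega
  have hcomm : a * y = y * a := by
    rw [hy, ← pow_succ', ← pow_succ]
  exact key y hy2 hy1 hcomm

lemma SL2fact.nm {G : Type*} {X Y : Set G} (h : X ∩ Y = ∅) {g : G}
    (hg : g ∈ X) (hg' : g ∈ Y) : False := by
  rw [Set.eq_empty_iff_forall_notMem] at h
  exact h g ⟨hg, hg'⟩

end Helpers

set_option maxHeartbeats 1000000 in
/-- For every integer `s ≥ 2`, the special linear group `SL(2, q)` over the finite
field with `q = 2 ^ s` elements has no `3`-fold factorization of the form
`(2, 2^(s-2) * (2^(2s) - 1), 2)`. -/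
theorem SL2_no_factorization (s : ℕ) (hs : 2 ≤ s)
    (F : Type*) [Field F] [Fintype F] (hF : Fintype.card F = 2 ^ s) :
    ¬ HasFactorization (Matrix.SpecialLinearGroup (Fin 2) F)
      ![2, 2 ^ (s - 2) * (2 ^ (2 * s) - 1), 2] := by
  -- characteristic two facts
  have hchar2 : ringChar F = 2 := by
    have hp : (ringChar F).Prime := CharP.char_is_prime F _
    obtain ⟨n, -, hc⟩ := FiniteField.card F (ringChar F)
    have hdvd : ringChar F ∣ 2 ^ s := by
      rw [← hF, hc]; exact dvd_pow_self _ n.pos.ne'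
    exact (Nat.prime_dvd_prime_iff_eq hp Nat.prime_two).mp (hp.dvd_of_dvd_pow hdvd)
  have h2 : (2 : F) = 0 := by
    have := CharP.cast_eq_zero F (ringChar F)
    rw [hchar2] at this; exact_mod_cast this
  have hsq : ∀ α : F, IsSquare α := FiniteField.isSquare_of_char_two hchar2
  rintro ⟨A, hcard, htot, hprod⟩
  set M : ℕ := 2 ^ (s - 2) * (2 ^ (2 * s) - 1) with hMdef
  have hM : 0 < M := by
    have h1 : (0:ℕ) < 2 ^ (s - 2) := Nat.pow_pos (by norm_num)
    have h2' : 1 < 2 ^ (2 * s) := Nat.one_lt_two_pow (by omega)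
    exact Nat.mul_pos h1 (by omega)
  have htot' : Nat.card (Matrix.SpecialLinearGroup (Fin 2) F) = 4 * M := by
    rw [htot]
    simp [Fin.prod_univ_three]
    ring
  -- extract the three sets
  have hA0 : (A 0).ncard = 2 := by
    have := hcard 0
    rw [Nat.card_coe_set_eq] at this
    simpa using this
  have hA2 : (A 2).ncard = 2 := by
    have := hcard 2
    rw [Nat.card_coe_set_eq] at this
    simpa using this
  have hB : (A 1).ncard = M := by
    have := hcard 1
    rw [Nat.card_coe_set_eq] at this
    simpa using this
  obtain ⟨a₁, a₂, hane, hA0eq⟩ := Set.ncard_eq_two.mp hA0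
  obtain ⟨c₁, c₂, hcne, hA2eq⟩ := Set.ncard_eq_two.mp hA2
  have hprod' : A 0 * (A 1 * A 2) = Set.univ := by
    simpa [List.ofFn_succ] using hprod
  -- the four blocks
  set S11 := (fun x => a₁ * x * c₁) '' (A 1) with hS11
  set S12 := (fun x => a₁ * x * c₂) '' (A 1) with hS12
  set S21 := (fun x => a₂ * x * c₁) '' (A 1) with hS21
  set S22 := (fun x => a₂ * x * c₂) '' (A 1) with hS22
  have hinj : ∀ p q : Matrix.SpecialLinearGroup (Fin 2) F,
      Function.Injective (fun x => p * x * q) := by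
    intro p q u v h
    dsimp at h
    exact mul_left_cancel (mul_right_cancel h)
  have c11 : S11.ncard = M := by rw [hS11, Set.ncard_image_of_injective _ (hinj _ _), hB]
  have c12 : S12.ncard = M := by rw [hS12, Set.ncard_image_of_injective _ (hinj _ _), hB]
  have c21 : S21.ncard = M := by rw [hS21, Set.ncard_image_of_injective _ (hinj _ _), hB]
  have c22 : S22.ncard = M := by rw [hS22, Set.ncard_image_of_injective _ (hinj _ _), hB]
  -- coverage
  have cov : ∀ g : Matrix.SpecialLinearGroup (Fin 2) F,
      g ∈ S11 ∨ g ∈ S21 ∨ g ∈ S12 ∨ g ∈ S22 := by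
    intro g
    have hg : g ∈ A 0 * (A 1 * A 2) := by rw [hprod']; trivial
    rw [Set.mem_mul] at hg
    obtain ⟨x, hx, yz, hyz, hxyz⟩ := hg
    rw [Set.mem_mul] at hyz
    obtain ⟨y, hy, z, hz, hyz'⟩ := hyz
    rw [hA0eq] at hx
    rw [hA2eq] at hz
    simp only [Set.mem_insert_iff, Set.mem_singleton_iff] at hx hz
    subst hyz'
    subst hxyz
    rcases hx with rfl | rfl <;> rcases hz with rfl | rfl
    · exact Or.inl ⟨y, hy, by simp [mul_assoc]⟩
    · exact Or.inr (Or.inr (Or.inl ⟨y, hy, by simp [mul_assoc]⟩))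
    · exact Or.inr (Or.inl ⟨y, hy, by simp [mul_assoc]⟩)
    · exact Or.inr (Or.inr (Or.inr ⟨y, hy, by simp [mul_assoc]⟩))
  -- pairwise disjointness
  have d_11_21 : S11 ∩ S21 = ∅ :=
    SL2fact.four_disjoint S11 S21 S12 S22 cov c11 c21 c12 c22 htot'
  have d_11_22 : S11 ∩ S22 = ∅ :=
    SL2fact.four_disjoint S11 S22 S12 S21 (fun g => by have := cov g; tauto)
      c11 c22 c12 c21 htot'
  have d_12_21 : S12 ∩ S21 = ∅ :=
    SL2fact.four_disjoint S12 S21 S11 S22 (fun g => by have := cov g; tauto)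
      c12 c21 c11 c22 htot'
  have d_12_22 : S12 ∩ S22 = ∅ :=
    SL2fact.four_disjoint S12 S22 S11 S21 (fun g => by have := cov g; tauto)
      c12 c22 c11 c21 htot'
  have d_11_12 : S11 ∩ S12 = ∅ :=
    SL2fact.four_disjoint S11 S12 S21 S22 (fun g => by have := cov g; tauto)
      c11 c12 c21 c22 htot'
  have d_21_22 : S21 ∩ S22 = ∅ :=
    SL2fact.four_disjoint S21 S22 S11 S12 (fun g => by have := cov g; tauto)
      c21 c22 c11 c12 htot'
  -- the elements a and c
  have ha1 : a₂ * a₁⁻¹ ≠ 1 := by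
    intro h
    exact hane (mul_inv_eq_one.mp h).symm
  have hc1 : c₁⁻¹ * c₂ ≠ 1 := by
    intro h
    exact hcne (inv_mul_eq_one.mp h)
  -- B nonempty
  have hBne : (A 1).Nonempty := by
    apply Set.nonempty_of_ncard_ne_zero
    rw [hB]
    exact hM.ne'
  obtain ⟨b₀, hb₀⟩ := hBne
  have hmem0 : a₁ * b₀ * c₁ ∈ S11 := by
    rw [hS11]
    exact ⟨b₀, hb₀, rfl⟩
  -- a² = 1
  have im1 : (fun g => (a₂ * a₁⁻¹) * g) '' S11 = S21 := by
    rw [hS11, hS21, Set.image_image]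
    apply Set.image_congr'
    intro x
    group
  have im2 : (fun g => (a₂ * a₁⁻¹) * g) '' S12 = S22 := by
    rw [hS12, hS22, Set.image_image]
    apply Set.image_congr'
    intro x
    group
  have imE : (fun g => (a₂ * a₁⁻¹) * g) '' (S11 ∪ S12) = (S11 ∪ S12)ᶜ := by
    rw [Set.image_union, im1, im2]
    ext g
    simp only [Set.mem_union, Set.mem_compl_iff]
    constructor
    · rintro (h | h) (h' | h')
      · exact SL2fact.nm d_11_21 h' h
      · exact SL2fact.nm d_12_21 h' h
      · exact SL2fact.nm d_11_22 h' h
      · exact SL2fact.nm d_12_22 h' h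
    · intro h
      have := cov g
      tauto
  have hEne : (S11 ∪ S12).Nonempty := ⟨a₁ * b₀ * c₁, Or.inl hmem0⟩
  have haa : (a₂ * a₁⁻¹) * (a₂ * a₁⁻¹) = 1 := by
    apply SL2fact.sq_eq_one_of_even_orderOf
    · exact SL2fact.even_orderOf_of_flip _ _ hEne imE
    · intro y hy2 hy1 hc
      exact SL2fact.sq_one_of_commute h2 _ y hy2 hy1 hc
  -- c² = 1
  have im3 : (fun g => g * (c₁⁻¹ * c₂)) '' S11 = S12 := by
    rw [hS11, hS12, Set.image_image]
    apply Set.image_congr'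
    intro x
    group
  have im4 : (fun g => g * (c₁⁻¹ * c₂)) '' S21 = S22 := by
    rw [hS21, hS22, Set.image_image]
    apply Set.image_congr'
    intro x
    group
  have imE' : (fun g => g * (c₁⁻¹ * c₂)) '' (S11 ∪ S21) = (S11 ∪ S21)ᶜ := by
    rw [Set.image_union, im3, im4]
    ext g
    simp only [Set.mem_union, Set.mem_compl_iff]
    constructor
    · rintro (h | h) (h' | h')
      · exact SL2fact.nm d_11_12 h' h
      · exact SL2fact.nm d_12_21 h h'
      · exact SL2fact.nm d_11_22 h' h
      · exact SL2fact.nm d_21_22 h' h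
    · intro h
      have := cov g
      tauto
  have hEne' : (S11 ∪ S21).Nonempty := ⟨a₁ * b₀ * c₁, Or.inl hmem0⟩
  have hcc : (c₁⁻¹ * c₂) * (c₁⁻¹ * c₂) = 1 := by
    apply SL2fact.sq_eq_one_of_even_orderOf
    · exact SL2fact.even_orderOf_of_flip_right _ _ hEne' imE'
    · intro y hy2 hy1 hc
      exact SL2fact.sq_one_of_commute h2 _ y hy2 hy1 hc
  -- a and c are conjugate
  obtain ⟨g1, hg1⟩ := SL2fact.conj_u h2 hsq _ haa ha1
  obtain ⟨g2, hg2⟩ := SL2fact.conj_u h2 hsq _ hcc hc1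
  set w := g1 * g2⁻¹ with hwdef
  have h₂' : g2⁻¹ * ((c₁⁻¹ * c₂) * g2) = SL2fact.uSL F := by
    rw [hg2]
    exact inv_mul_cancel_left g2 (SL2fact.uSL F)
  have hw : (a₂ * a₁⁻¹) * w = w * (c₁⁻¹ * c₂) := by
    calc (a₂ * a₁⁻¹) * (g1 * g2⁻¹) = ((a₂ * a₁⁻¹) * g1) * g2⁻¹ := by group
    _ = (g1 * SL2fact.uSL F) * g2⁻¹ := by rw [hg1]
    _ = (g1 * (g2⁻¹ * ((c₁⁻¹ * c₂) * g2))) * g2⁻¹ := by rw [h₂']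
    _ = (g1 * g2⁻¹) * (c₁⁻¹ * c₂) := by group
  have hfix : (a₂ * a₁⁻¹) * w * (c₁⁻¹ * c₂) = w := by
    rw [hw, mul_assoc, hcc, mul_one]
  -- auxiliary identities
  have ha' : (a₂ * a₁⁻¹) * a₂ = a₁ := by
    calc (a₂ * a₁⁻¹) * a₂ = ((a₂ * a₁⁻¹) * (a₂ * a₁⁻¹)) * a₁ := by group
    _ = a₁ := by rw [haa, one_mul]
  have hc' : c₂ * (c₁⁻¹ * c₂) = c₁ := by
    calc c₂ * (c₁⁻¹ * c₂) = c₁ * ((c₁⁻¹ * c₂) * (c₁⁻¹ * c₂)) := by group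
    _ = c₁ := by rw [hcc, mul_one]
  -- final contradiction
  rcases cov w with hcase | hcase | hcase | hcase
  · obtain ⟨b, hb, hbe⟩ := id hcase
    have hmem : (a₂ * a₁⁻¹) * w * (c₁⁻¹ * c₂) ∈ S22 := by
      refine ⟨b, hb, ?_⟩
      show a₂ * b * c₂ = (a₂ * a₁⁻¹) * w * (c₁⁻¹ * c₂)
      rw [← hbe]
      show a₂ * b * c₂ = (a₂ * a₁⁻¹) * (a₁ * b * c₁) * (c₁⁻¹ * c₂)
      group
    rw [hfix] at hmem
    exact SL2fact.nm d_11_22 hcase hmem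
  · obtain ⟨b, hb, hbe⟩ := id hcase
    have hmem : (a₂ * a₁⁻¹) * w * (c₁⁻¹ * c₂) ∈ S12 := by
      refine ⟨b, hb, ?_⟩
      show a₁ * b * c₂ = (a₂ * a₁⁻¹) * w * (c₁⁻¹ * c₂)
      rw [← hbe]
      show a₁ * b * c₂ = (a₂ * a₁⁻¹) * (a₂ * b * c₁) * (c₁⁻¹ * c₂)
      rw [show (a₂ * a₁⁻¹) * (a₂ * b * c₁) * (c₁⁻¹ * c₂)
          = ((a₂ * a₁⁻¹) * a₂) * b * c₂ from by group, ha']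
    rw [hfix] at hmem
    exact SL2fact.nm d_12_21 hmem hcase
  · obtain ⟨b, hb, hbe⟩ := id hcase
    have hmem : (a₂ * a₁⁻¹) * w * (c₁⁻¹ * c₂) ∈ S21 := by
      refine ⟨b, hb, ?_⟩
      show a₂ * b * c₁ = (a₂ * a₁⁻¹) * w * (c₁⁻¹ * c₂)
      rw [← hbe]
      show a₂ * b * c₁ = (a₂ * a₁⁻¹) * (a₁ * b * c₂) * (c₁⁻¹ * c₂)
      rw [show (a₂ * a₁⁻¹) * (a₁ * b * c₂) * (c₁⁻¹ * c₂)
          = a₂ * b * (c₂ * (c₁⁻¹ * c₂)) from by group, hc']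

    rw [hfix] at hmem
    exact SL2fact.nm d_12_21 hcase hmem
  · obtain ⟨b, hb, hbe⟩ := id hcase
    have hmem : (a₂ * a₁⁻¹) * w * (c₁⁻¹ * c₂) ∈ S11 := by
      refine ⟨b, hb, ?_⟩
      show a₁ * b * c₁ = (a₂ * a₁⁻¹) * w * (c₁⁻¹ * c₂)
      rw [← hbe]
      show a₁ * b * c₁ = (a₂ * a₁⁻¹) * (a₂ * b * c₂) * (c₁⁻¹ * c₂)
      rw [show (a₂ * a₁⁻¹) * (a₂ * b * c₂) * (c₁⁻¹ * c₂)
          = ((a₂ * a₁⁻¹) * a₂) * b * (c₂ * (c₁⁻¹ * c₂)) from by group, ha', hc']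
    rw [hfix] at hmem
    exact SL2fact.nm d_11_22 hmem hcase
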